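/- Let n ≥ 3, let a_1, …, a_n be positive reals, let p = (x_1, …, x_n) ∈ Σ, and set S = ∑_{i=1}^n a_i^{-4} x_i² (note S > 0 since p ≠ 0). Then p is umbilic if and only if ∑_{i=1}^n a_i^{-4} − 2 S^{-1} ∑_{i=1}^n a_i^{-8} x_i² + S^{-2} (∑_{i=1}^n a_i^{-6} x_i²)² = (1/(n−1)) (∑_{i=1}^n a_i^{-2} − S^{-1} ∑_{i=1}^n a_i^{-6} x_i²)². -/

import Mathlib

open Finset

set_option maxHeartbeats 1600000

lemma key (n : ℕ) (hn : 3 ≤ n) (c v : Fin n → ℝ) (hS0 : (∑ i, v i ^ 2) ≠ 0) :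
    (∃ lam : ℝ, ∀ u : Fin n → ℝ, (∑ i, v i * u i = 0) →
        ∑ i, c i * u i ^ 2 = lam * ∑ i, u i ^ 2) ↔
      (∑ i, c i ^ 2) - 2 / (∑ i, v i ^ 2) * (∑ i, c i ^ 2 * v i ^ 2)
          + (∑ i, c i * v i ^ 2) ^ 2 / (∑ i, v i ^ 2) ^ 2
        = 1 / ((n : ℝ) - 1) *
            ((∑ i, c i) - (∑ i, c i * v i ^ 2) / (∑ i, v i ^ 2)) ^ 2 := by
  set S := ∑ i, v i ^ 2 with hS_def
  set K := ∑ i, c i * v i ^ 2 with hK_def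
  set Q := ∑ i, c i ^ 2 * v i ^ 2 with hQ_def
  set C := ∑ i, c i with hC_def
  have hNpos : (0:ℝ) < (n:ℝ) - 1 := by
    have h3 : (3:ℝ) ≤ (n:ℝ) := by exact_mod_cast hn
    linarith
  have hN : ((n:ℝ) - 1) ≠ 0 := ne_of_gt hNpos
  set Pm : Fin n → Fin n → ℝ :=
    fun i j => (if i = j then (1:ℝ) else 0) - v i * v j / S with hPm_def
  set T : Fin n → Fin n → ℝ := fun i j =>
    (if i = j then c i else 0) - (c i + c j) * (v i * v j) / S + (v i * v j) * K / S ^ 2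
    with hT_def
  -- tangency of rows of Pm
  have htan : ∀ i, ∑ k, v k * Pm i k = 0 := by
    intro i
    have e : ∀ k, v k * Pm i k = (if i = k then v k else 0) - (v i / S) * v k ^ 2 := by
      intro k
      by_cases h : i = k <;> simp [hPm_def, h] <;> ring
    rw [Finset.sum_congr rfl fun k _ => e k, Finset.sum_sub_distrib, ← Finset.mul_sum,
      Finset.sum_ite_eq, ← hS_def]
    simp
    field_simp
    ring
  -- row products
  have hPP : ∀ i j, ∑ k, Pm i k * Pm j k = Pm i j := by
    intro i j
    have e : ∀ k, Pm i k * Pm j k =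
        (if i = k then (if j = k then (1:ℝ) else 0) else 0)
          - (if i = k then v j * v k / S else 0)
          - (if j = k then v i * v k / S else 0)
          + (v i * v j / S ^ 2) * v k ^ 2 := by
      intro k
      by_cases h1 : i = k <;> by_cases h2 : j = k <;> simp [hPm_def, h1, h2] <;> ring
    rw [Finset.sum_congr rfl fun k _ => e k]
    simp only [Finset.sum_add_distrib, Finset.sum_sub_distrib, ← Finset.mul_sum,
      Finset.sum_ite_eq, Finset.mem_univ, if_true, ← hS_def]
    rcases eq_or_ne i j with h | h
    · subst h; simp [hPm_def]; field_simp; ring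
    · simp [hPm_def, h, Ne.symm h]; field_simp; ring
  have hcPP : ∀ i j, ∑ k, c k * (Pm i k * Pm j k) = T i j := by
    intro i j
    have e : ∀ k, c k * (Pm i k * Pm j k) =
        (if i = k then (if j = k then c k else 0) else 0)
          - (if i = k then c k * (v j * v k) / S else 0)
          - (if j = k then c k * (v i * v k) / S else 0)
          + (v i * v j / S ^ 2) * (c k * v k ^ 2) := by
      intro k
      by_cases h1 : i = k <;> by_cases h2 : j = k <;> simp [hPm_def, h1, h2] <;> ring
    rw [Finset.sum_congr rfl fun k _ => e k]
    simp only [Finset.sum_add_distrib, Finset.sum_sub_distrib, ← Finset.mul_sum,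
      Finset.sum_ite_eq, Finset.mem_univ, if_true, ← hK_def]
    rcases eq_or_ne i j with h | h
    · subst h; simp [hT_def]; field_simp; ring
    · simp [hT_def, h, Ne.symm h]; field_simp; ring
  -- traces
  have htrP : ∑ i, Pm i i = (n:ℝ) - 1 := by
    have e : ∀ i : Fin n, Pm i i = 1 - v i ^ 2 / S := by
      intro i; simp [hPm_def]; ring
    rw [Finset.sum_congr rfl fun i _ => e i, Finset.sum_sub_distrib, ← Finset.sum_div,
      ← hS_def]
    simp [Finset.card_univ]
    simp [hS0]
  have htrT : ∑ i, T i i = C - K / S := by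
    have e : ∀ i : Fin n, T i i = c i - (2 / S) * (c i * v i ^ 2) + (K / S ^ 2) * v i ^ 2 := by
      intro i; simp [hT_def]; ring
    rw [Finset.sum_congr rfl fun i _ => e i, Finset.sum_add_distrib, Finset.sum_sub_distrib,
      ← Finset.mul_sum, ← Finset.mul_sum, ← hS_def, ← hK_def, ← hC_def]
    field_simp
    ring
  -- double sums
  have hPm2 : ∑ i, ∑ j, Pm i j ^ 2 = (n:ℝ) - 1 := by
    have inner : ∀ i, ∑ j, Pm i j ^ 2 = 1 - 2 * v i ^ 2 / S + (v i ^ 2 / S ^ 2) * S := by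
      intro i
      have e : ∀ j, Pm i j ^ 2 =
          (if i = j then 1 - 2 * v i ^ 2 / S else 0) + (v i ^ 2 / S ^ 2) * v j ^ 2 := by
        intro j
        by_cases h : i = j <;> simp [hPm_def, h] <;> ring
      rw [Finset.sum_congr rfl fun j _ => e j, Finset.sum_add_distrib, ← Finset.mul_sum,
        Finset.sum_ite_eq, ← hS_def]
      simp
    rw [Finset.sum_congr rfl fun i _ => inner i]
    simp only [Finset.sum_add_distrib, Finset.sum_sub_distrib, ← Finset.sum_div,
      ← Finset.mul_sum]
    rw [show ∑ _i : Fin n, (1:ℝ) = (n:ℝ) by simp [Finset.card_univ]]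
    rw [← Finset.sum_mul, ← Finset.sum_div, ← hS_def]
    field_simp
    ring
  have hT2 : ∑ i, ∑ j, T i j ^ 2 =
      (∑ i, c i ^ 2) - 2 / S * Q + K ^ 2 / S ^ 2 := by
    have inner : ∀ i, ∑ j, T i j ^ 2 =
        c i ^ 2 + (-3 / S) * (c i ^ 2 * v i ^ 2) + (2 * K / S ^ 2) * (c i * v i ^ 2)
          + (Q / S ^ 2 - K ^ 2 / S ^ 3) * v i ^ 2 := by
      intro i
      have e : ∀ j, T i j ^ 2 =
          (if i = j then c i ^ 2 + 2 * c i * v i ^ 2 * (K / S ^ 2 - 2 * c i / S) else 0)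
            + (v i ^ 2 * (K / S ^ 2 - c i / S) ^ 2) * v j ^ 2
            - (2 * v i ^ 2 * (K / S ^ 2 - c i / S) / S) * (c j * v j ^ 2)
            + (v i ^ 2 / S ^ 2) * (c j ^ 2 * v j ^ 2) := by
        intro j
        by_cases h : i = j <;> simp [hT_def, h] <;> ring
      rw [Finset.sum_congr rfl fun j _ => e j]
      simp only [Finset.sum_add_distrib, Finset.sum_sub_distrib, ← Finset.mul_sum,
        Finset.sum_ite_eq, Finset.mem_univ, if_true, ← hS_def, ← hK_def, ← hQ_def]
      field_simp
      ring
    rw [Finset.sum_congr rfl fun i _ => inner i]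
    simp only [Finset.sum_add_distrib, ← Finset.mul_sum, ← Finset.sum_div,
      ← hS_def, ← hK_def, ← hQ_def]
    field_simp
    ring
  have hTP : ∑ i, ∑ j, T i j * Pm i j = C - K / S := by
    have inner : ∀ i, ∑ j, T i j * Pm i j =
        c i + (-2 / S) * (c i * v i ^ 2) + (K / S ^ 2) * v i ^ 2 := by
      intro i
      have e : ∀ j, T i j * Pm i j =
          (if i = j then c i + v i ^ 2 * K / S ^ 2 - 3 * c i * v i ^ 2 / S else 0)
            + (-(v i ^ 2 * (K / S ^ 2 - c i / S)) / S) * v j ^ 2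
            + (v i ^ 2 / S ^ 2) * (c j * v j ^ 2) := by
        intro j
        by_cases h : i = j <;> simp [hT_def, hPm_def, h] <;> ring
      rw [Finset.sum_congr rfl fun j _ => e j]
      simp only [Finset.sum_add_distrib, ← Finset.mul_sum,
        Finset.sum_ite_eq, Finset.mem_univ, if_true, ← hS_def, ← hK_def]
      field_simp
      ring
    rw [Finset.sum_congr rfl fun i _ => inner i]
    simp only [Finset.sum_add_distrib, ← Finset.mul_sum, ← hS_def, ← hK_def, ← hC_def]
    field_simp
    ring
  constructor
  · -- forward
    rintro ⟨lam, hlam⟩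
    have hbil : ∀ i j, T i j = lam * Pm i j := by
      intro i j
      have ht1 : ∑ k, v k * (Pm i k + Pm j k) = 0 := by
        simp only [mul_add, Finset.sum_add_distrib, htan i, htan j, add_zero]
      have ht2 : ∑ k, v k * (Pm i k - Pm j k) = 0 := by
        simp only [mul_sub, Finset.sum_sub_distrib, htan i, htan j, sub_zero]
      have h1 := hlam (fun k => Pm i k + Pm j k) ht1
      have h2 := hlam (fun k => Pm i k - Pm j k) ht2
      have e4 : (∑ k, c k * (Pm i k + Pm j k) ^ 2) - (∑ k, c k * (Pm i k - Pm j k) ^ 2)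
          = 4 * ∑ k, c k * (Pm i k * Pm j k) := by
        rw [← Finset.sum_sub_distrib, Finset.mul_sum]
        exact Finset.sum_congr rfl fun k _ => by ring
      have e5 : (∑ k, (Pm i k + Pm j k) ^ 2) - (∑ k, (Pm i k - Pm j k) ^ 2)
          = 4 * ∑ k, Pm i k * Pm j k := by
        rw [← Finset.sum_sub_distrib, Finset.mul_sum]
        exact Finset.sum_congr rfl fun k _ => by ring
      have hb : ∑ k, c k * (Pm i k * Pm j k) = lam * ∑ k, Pm i k * Pm j k := by
        linear_combination (h1 - h2 - e4 + lam * e5) / 4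
      rw [hcPP i j, hPP i j] at hb
      exact hb
    have htr : C - K / S = lam * ((n:ℝ) - 1) := by
      rw [← htrT, ← htrP, Finset.mul_sum]
      exact Finset.sum_congr rfl fun i _ => hbil i i
    have hT2' : ∑ i, ∑ j, T i j ^ 2 = lam ^ 2 * ((n:ℝ) - 1) := by
      rw [← hPm2, Finset.mul_sum]
      refine Finset.sum_congr rfl fun i _ => ?_
      rw [Finset.mul_sum]
      exact Finset.sum_congr rfl fun j _ => by rw [hbil i j]; ring
    rw [← hT2, hT2', htr]
    field_simp
  · -- backward
    intro hEq
    set mu := (C - K / S) / ((n:ℝ) - 1) with hmu_def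
    have hsq : ∑ i, ∑ j, (T i j - mu * Pm i j) ^ 2 = 0 := by
      have expand : ∑ i, ∑ j, (T i j - mu * Pm i j) ^ 2 =
          (∑ i, ∑ j, T i j ^ 2) - 2 * mu * (∑ i, ∑ j, T i j * Pm i j)
            + mu ^ 2 * (∑ i, ∑ j, Pm i j ^ 2) := by
        simp only [Finset.mul_sum]
        rw [← Finset.sum_sub_distrib, ← Finset.sum_add_distrib]
        refine Finset.sum_congr rfl fun i _ => ?_
        rw [← Finset.sum_sub_distrib, ← Finset.sum_add_distrib]
        exact Finset.sum_congr rfl fun j _ => by ring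
      rw [expand, hT2, hTP, hPm2, hEq, hmu_def]
      field_simp
      ring
    have hzero : ∀ i j, T i j = mu * Pm i j := by
      intro i j
      have h0 : ∀ i ∈ (univ : Finset (Fin n)), (0:ℝ) ≤ ∑ j, (T i j - mu * Pm i j) ^ 2 :=
        fun i _ => Finset.sum_nonneg fun j _ => sq_nonneg _
      have hi := (Finset.sum_eq_zero_iff_of_nonneg h0).mp hsq i (Finset.mem_univ i)
      have hj := (Finset.sum_eq_zero_iff_of_nonneg
        (fun j _ => sq_nonneg (T i j - mu * Pm i j))).mp hi j (Finset.mem_univ j)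
      have := pow_eq_zero_iff (n := 2) (by norm_num) |>.mp hj
      linarith [this]
    refine ⟨mu, fun u hu => ?_⟩
    have hE1 : ∑ i, ∑ j, (u i * u j) * T i j = ∑ i, c i * u i ^ 2 := by
      have inner : ∀ i, ∑ j, (u i * u j) * T i j =
          c i * u i ^ 2 - (u i * v i / S) * (∑ j, c j * (v j * u j)) := by
        intro i
        have e : ∀ j, (u i * u j) * T i j =
            (if i = j then c i * u i ^ 2 else 0)
              + (u i * v i * (K / S ^ 2)) * (v j * u j)
              - (u i * v i * (c i / S)) * (v j * u j)
              - (u i * v i / S) * (c j * (v j * u j)) := by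
          intro j
          by_cases h : i = j <;> simp [hT_def, h] <;> ring
        rw [Finset.sum_congr rfl fun j _ => e j]
        simp only [Finset.sum_add_distrib, Finset.sum_sub_distrib, ← Finset.mul_sum,
          Finset.sum_ite_eq, Finset.mem_univ, if_true, hu]
        ring
      rw [Finset.sum_congr rfl fun i _ => inner i]
      rw [Finset.sum_sub_distrib, ← Finset.sum_mul]
      rw [show (∑ i, u i * v i / S) = (∑ i, v i * u i) / S from by
        rw [← Finset.sum_div]; exact congrArg (· / S) (Finset.sum_congr rfl fun i _ => by ring)]
      rw [hu]
      simp
    have hE2 : ∑ i, ∑ j, (u i * u j) * Pm i j = ∑ i, u i ^ 2 := by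
      have inner : ∀ i, ∑ j, (u i * u j) * Pm i j = u i ^ 2 := by
        intro i
        have e : ∀ j, (u i * u j) * Pm i j =
            (if i = j then u i ^ 2 else 0) - (u i * v i / S) * (v j * u j) := by
          intro j
          by_cases h : i = j <;> simp [hPm_def, h] <;> ring
        rw [Finset.sum_congr rfl fun j _ => e j]
        simp only [Finset.sum_sub_distrib, ← Finset.mul_sum,
          Finset.sum_ite_eq, Finset.mem_univ, if_true, hu]
        ring
      exact Finset.sum_congr rfl fun i _ => inner i
    calc ∑ i, c i * u i ^ 2 = ∑ i, ∑ j, (u i * u j) * T i j := hE1.symm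
      _ = ∑ i, ∑ j, (u i * u j) * (mu * Pm i j) := by
          exact Finset.sum_congr rfl fun i _ => Finset.sum_congr rfl fun j _ => by
            rw [hzero i j]
      _ = mu * ∑ i, ∑ j, (u i * u j) * Pm i j := by
          simp only [Finset.mul_sum]
          exact Finset.sum_congr rfl fun i _ => Finset.sum_congr rfl fun j _ => by ring
      _ = mu * ∑ i, u i ^ 2 := by rw [hE2]

/-- A point `x` on the ellipsoid `∑ xᵢ²/aᵢ² = 1` with semi-axes `a` is *umbilic* if the
second fundamental form at `x` is proportional to the induced metric, i.e. there is
`λ ∈ ℝ` such that every tangent vector `u` (i.e. `∑ aᵢ⁻² xᵢ uᵢ = 0`) satisfies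
`∑ aᵢ⁻² uᵢ² = λ ∑ uᵢ²`. -/
def IsUmbilic {n : ℕ} (a x : Fin n → ℝ) : Prop :=
  ∃ lam : ℝ, ∀ u : Fin n → ℝ,
    (∑ i, x i * u i / a i ^ 2 = 0) → ∑ i, u i ^ 2 / a i ^ 2 = lam * ∑ i, u i ^ 2

/-- **Scalar umbilicity criterion for a general ellipsoid.**
With `S = ∑ aᵢ⁻⁴ xᵢ²`, a point `p = (x₁, …, xₙ)` on the ellipsoid is umbilic iff
`∑ aᵢ⁻⁴ − 2 S⁻¹ ∑ aᵢ⁻⁸ xᵢ² + S⁻² (∑ aᵢ⁻⁶ xᵢ²)²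
  = (1/(n−1)) (∑ aᵢ⁻² − S⁻¹ ∑ aᵢ⁻⁶ xᵢ²)²`. -/
theorem stmt_3 (n : ℕ) (hn : 3 ≤ n) (a x : Fin n → ℝ) (ha : ∀ i, 0 < a i)
    (hx : ∑ i, x i ^ 2 / a i ^ 2 = 1) :
    IsUmbilic a x ↔
      (∑ i, 1 / a i ^ 4) - 2 / (∑ i, x i ^ 2 / a i ^ 4) * (∑ i, x i ^ 2 / a i ^ 8)
          + (∑ i, x i ^ 2 / a i ^ 6) ^ 2 / (∑ i, x i ^ 2 / a i ^ 4) ^ 2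
        = (1 / ((n : ℝ) - 1)) *
            ((∑ i, 1 / a i ^ 2) - (∑ i, x i ^ 2 / a i ^ 6) / (∑ i, x i ^ 2 / a i ^ 4)) ^ 2 := by
  have ha' : ∀ i, a i ≠ 0 := fun i => (ha i).ne'
  have hS : (∑ i, (x i / a i ^ 2) ^ 2) ≠ 0 := by
    intro h0
    have hz := (Finset.sum_eq_zero_iff_of_nonneg
      (fun i (_ : i ∈ Finset.univ) => sq_nonneg (x i / a i ^ 2))).mp h0
    have hzero : ∑ i, x i ^ 2 / a i ^ 2 = 0 := Finset.sum_eq_zero fun i _ => by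
      have h1 := hz i (Finset.mem_univ i)
      have h2 : x i / a i ^ 2 = 0 := by
        have := pow_eq_zero_iff (n := 2) (by norm_num) |>.mp h1
        exact this
      have h3 : x i = 0 := by
        rcases div_eq_zero_iff.mp h2 with h | h
        · exact h
        · exact absurd h (pow_ne_zero 2 (ha' i))
      simp [h3]
    rw [hzero] at hx
    exact one_ne_zero hx.symm
  have key' := key n hn (fun i => 1 / a i ^ 2) (fun i => x i / a i ^ 2) hS
  have e1 : IsUmbilic a x ↔ (∃ lam : ℝ, ∀ u : Fin n → ℝ,
      (∑ i, (x i / a i ^ 2) * u i = 0) →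
        ∑ i, (1 / a i ^ 2) * u i ^ 2 = lam * ∑ i, u i ^ 2) := by
    unfold IsUmbilic
    refine exists_congr fun lam => forall_congr' fun u => ?_
    rw [show (∑ i, x i * u i / a i ^ 2) = ∑ i, (x i / a i ^ 2) * u i from
        Finset.sum_congr rfl fun i _ => by ring,
      show (∑ i, u i ^ 2 / a i ^ 2) = ∑ i, (1 / a i ^ 2) * u i ^ 2 from
        Finset.sum_congr rfl fun i _ => by ring]
  rw [e1, key']
  rw [show (∑ i, (1 / a i ^ 2 : ℝ) ^ 2) = ∑ i, 1 / a i ^ 4 from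
      Finset.sum_congr rfl fun i _ => by field_simp,
    show (∑ i, ((x i / a i ^ 2) : ℝ) ^ 2) = ∑ i, x i ^ 2 / a i ^ 4 from
      Finset.sum_congr rfl fun i _ => by field_simp,
    show (∑ i, ((1 / a i ^ 2 : ℝ)) ^ 2 * (x i / a i ^ 2) ^ 2) = ∑ i, x i ^ 2 / a i ^ 8 from
      Finset.sum_congr rfl fun i _ => by field_simp,
    show (∑ i, (1 / a i ^ 2 : ℝ) * (x i / a i ^ 2) ^ 2) = ∑ i, x i ^ 2 / a i ^ 6 from
      Finset.sum_congr rfl fun i _ => by field_simp]
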